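/- Let H be an n-vertex graph with a strict linear order < on E(H), and let k be a positive integer. If |E(H)| ≥ k·n, then H contains at least k·n/2 distinct monotone k-trails. -/

import Mathlib

open SimpleGraph

/-- `lt` is a strict linear order on the edges of `H`. -/
def IsEdgeOrder {V : Type} (H : SimpleGraph V) (lt : Sym2 V → Sym2 V → Prop) : Prop :=
  (∀ e ∈ H.edgeSet, ¬ lt e e) ∧
  (∀ e₁ ∈ H.edgeSet, ∀ e₂ ∈ H.edgeSet, ∀ e₃ ∈ H.edgeSet, lt e₁ e₂ → lt e₂ e₃ → lt e₁ e₃) ∧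
  (∀ e₁ ∈ H.edgeSet, ∀ e₂ ∈ H.edgeSet, e₁ ≠ e₂ → lt e₁ e₂ ∨ lt e₂ e₁)

set_option linter.unnecessarySeqFocus false
set_option linter.unusedSectionVars false

namespace MonotoneTrailAux
variable {V : Type} [DecidableEq V]

noncomputable def stepAux (K : ℕ) (g : V → ℕ) (u v : V) : V → ℕ :=
  Function.update (Function.update g u (max (g u) (min (g v + 1) K))) v
    (max (g v) (min (g u + 1) K))

lemma stepAux_comm (K : ℕ) (g : V → ℕ) (u v : V) : stepAux K g u v = stepAux K g v u := by
  funext w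
  rcases eq_or_ne u v with rfl | huv
  · rfl
  · simp only [stepAux, Function.update_apply]
    rcases eq_or_ne w u with rfl | hwu <;> rcases eq_or_ne w v with rfl | hwv <;> simp_all

noncomputable def stepg (K : ℕ) (g : V → ℕ) : Sym2 V → (V → ℕ) :=
  Sym2.lift ⟨fun u v => stepAux K g u v, fun u v => stepAux_comm K g u v⟩

noncomputable def goodAux (K : ℕ) (g : V → ℕ) (u v : V) : Finset (Sym2 V × V) :=
  (if g u = K then {(s(u,v), v)} else ∅) ∪ (if g v = K then {(s(u,v), u)} else ∅)

lemma goodAux_comm (K : ℕ) (g : V → ℕ) (u v : V) : goodAux K g u v = goodAux K g v u := by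
  have h : s(u,v) = s(v,u) := Sym2.eq_swap
  rw [goodAux, goodAux, h, Finset.union_comm]

noncomputable def goodF (K : ℕ) (g : V → ℕ) : Sym2 V → Finset (Sym2 V × V) :=
  Sym2.lift ⟨fun u v => goodAux K g u v, fun u v => goodAux_comm K g u v⟩

noncomputable def run (K : ℕ) (l : List (Sym2 V)) : (V → ℕ) × Finset (Sym2 V × V) :=
  l.foldl (fun st e => (stepg K st.1 e, st.2 ∪ goodF K st.1 e)) ((fun _ => 0), ∅)

lemma run_concat (K : ℕ) (l : List (Sym2 V)) (e : Sym2 V) :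
    run K (l ++ [e]) = (stepg K (run K l).1 e, (run K l).2 ∪ goodF K (run K l).1 e) :=
  List.foldl_concat _ _ _ _

lemma run_le (K : ℕ) (l : List (Sym2 V)) : ∀ w, (run K l).1 w ≤ K := by
  induction l using List.reverseRecOn with
  | nil => intro w; simp [run]
  | append_singleton l e ih =>
    rw [run_concat]
    induction e using Sym2.ind with
    | _ u v =>
      intro w
      have h1 := ih w; have h2 := ih u; have h3 := ih v
      show stepAux K (run K l).1 u v w ≤ K
      simp only [stepAux, Function.update_apply]
      split_ifs <;> omega

lemma mem_goodAux {K : ℕ} {g : V → ℕ} {u v : V} {p : Sym2 V × V}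
    (h : p ∈ goodAux K g u v) :
    (p = (s(u,v), v) ∧ g u = K) ∨ (p = (s(u,v), u) ∧ g v = K) := by
  simp only [goodAux, Finset.mem_union] at h
  rcases h with h | h
  · left; split_ifs at h with hc <;> simp_all
  · right; split_ifs at h with hc <;> simp_all

lemma stepAux_sum [Fintype V] (K : ℕ) (g : V → ℕ) {u v : V} (huv : u ≠ v)
    (hg : ∀ w, g w ≤ K) :
    (∑ w, g w) + 2 ≤ (∑ w, stepAux K g u v w) + (goodAux K g u v).card := by
  have hu : u ∈ Finset.univ \ ({v} : Finset V) := by simp [huv]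
  rw [stepAux, Finset.sum_update_of_mem (Finset.mem_univ v), Finset.sum_update_of_mem hu]
  have h2 : (∑ w, g w) = g v + (g u + ∑ x ∈ (Finset.univ \ {v}) \ {u}, g x) := by
    rw [← Finset.add_sum_erase _ g (Finset.mem_univ v),
      ← Finset.add_sum_erase _ g (show u ∈ Finset.univ.erase v by simp [huv])]
    congr 1
    congr 1
    congr 1 <;> simp [Finset.erase_eq]
  rw [h2]
  have hgu := hg u
  have hgv := hg v
  have hcard : (if g u = K then 1 else 0) + (if g v = K then 1 else 0)
      ≤ (goodAux K g u v).card := by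
    rw [goodAux]
    split_ifs with h1' h2'
    · rw [Finset.card_union_of_disjoint (by simp [huv, Ne.symm huv])]; simp
    · simp
    · simp
    · simp
  split_ifs at hcard <;> omega

lemma extend_walk {H : SimpleGraph V} {lt : Sym2 V → Sym2 V → Prop} {u v : V}
    (hadj : H.Adj u v) {l : List (Sym2 V)} (hlt : ∀ a ∈ l, lt a s(u,v)) {j : ℕ}
    (hw : ∃ (u0 : V) (w : H.Walk u0 u), w.length = j ∧ List.Chain' lt w.edges ∧
      ∀ e' ∈ w.edges, e' ∈ l) :
    ∃ (u0 : V) (w : H.Walk u0 v), w.length = j + 1 ∧ List.Chain' lt w.edges ∧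
      (∀ e' ∈ w.edges, e' ∈ l ∨ e' = s(u,v)) ∧ w.edges.getLast? = some s(u,v) := by
  obtain ⟨u0, w, hlen, hch, hmem⟩ := hw
  refine ⟨u0, w.concat hadj, ?_, ?_, ?_, ?_⟩
  · rw [SimpleGraph.Walk.length_concat, hlen]
  · rw [SimpleGraph.Walk.edges_concat, List.concat_eq_append]
    refine List.IsChain.append hch (List.isChain_singleton _) ?_
    intro x hx y hy
    simp only [List.head?_cons, Option.mem_some_iff] at hy
    subst hy
    exact hlt x (hmem x (List.mem_of_mem_getLast? hx))
  · intro e' he'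
    rw [SimpleGraph.Walk.edges_concat, List.concat_eq_append, List.mem_append] at he'
    rcases he' with h | h
    · exact Or.inl (hmem _ h)
    · simp at h; exact Or.inr h
  · rw [SimpleGraph.Walk.edges_concat, List.concat_eq_append, List.getLast?_concat]

lemma run_inv [Fintype V] (K : ℕ) (H : SimpleGraph V) (lt : Sym2 V → Sym2 V → Prop)
    (l : List (Sym2 V)) (hnd : l.Nodup) (hmem : ∀ e ∈ l, e ∈ H.edgeSet)
    (hp : l.Pairwise lt) :
    (∀ p ∈ (run K l).2, p.1 ∈ l)
    ∧ 2 * l.length ≤ (∑ w, (run K l).1 w) + (run K l).2.card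
    ∧ (∀ v j, j ≤ (run K l).1 v → ∃ (u : V) (w : H.Walk u v),
        w.length = j ∧ List.Chain' lt w.edges ∧ ∀ e' ∈ w.edges, e' ∈ l)
    ∧ (∀ p ∈ (run K l).2, ∃ x : (u : V) × (v : V) × H.Walk u v,
        x.2.1 = p.2 ∧ x.2.2.length = K + 1 ∧ List.Chain' lt x.2.2.edges ∧
        x.2.2.edges.getLast? = some p.1) := by
  induction l using List.reverseRecOn with
  | nil =>
    refine ⟨by simp [run], by simp [run], ?_, by simp [run]⟩
    intro v j hj
    simp only [run, List.foldl_nil] at hj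
    interval_cases j
    exact ⟨v, SimpleGraph.Walk.nil, by simp [List.Chain', List.isChain_nil]⟩
  | append_singleton l e ih =>
    have hnd' : l.Nodup := (List.nodup_append'.mp hnd).1
    have he_not : e ∉ l := by
      intro hc
      have := (List.nodup_append'.mp hnd).2.2
      exact this hc (by simp)
    have hmem' : ∀ e' ∈ l, e' ∈ H.edgeSet := fun e' h => hmem e' (by simp [h])
    have he : e ∈ H.edgeSet := hmem e (by simp)
    have hp' : l.Pairwise lt := (List.pairwise_append.mp hp).1
    have hlt : ∀ a ∈ l, lt a e := by
      intro a ha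
      exact (List.pairwise_append.mp hp).2.2 a ha e (by simp)
    obtain ⟨hfst, hcnt, hwalk, hgood⟩ := ih hnd' hmem' hp'
    have hgle := run_le K l
    induction e using Sym2.ind with
    | _ u v =>
    have hadj : H.Adj u v := H.mem_edgeSet.mp he
    have huv : u ≠ v := hadj.ne
    set g := (run K l).1 with hg
    set GP := (run K l).2 with hGP
    have hrun : run K (l ++ [s(u,v)]) = (stepAux K g u v, GP ∪ goodAux K g u v) := by
      rw [run_concat]
      rfl
    rw [hrun]
    have hget : ∀ (a b : V) (j : ℕ), H.Adj a b → (∀ x ∈ l, lt x s(a,b)) →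
        j ≤ max (g b) (min (g a + 1) K) →
        ∃ (u' : V) (w : H.Walk u' b),
          w.length = j ∧ List.Chain' lt w.edges ∧ ∀ e' ∈ w.edges, e' ∈ l ∨ e' = s(a,b) := by
      intro a b j hab hlt2 hj'
      rcases le_max_iff.mp hj' with hjb | hja
      · obtain ⟨u', w, h1, h2, h3⟩ := hwalk b j hjb
        exact ⟨u', w, h1, h2, fun e' he' => Or.inl (h3 e' he')⟩
      · match j, hja with
        | 0, _ => exact ⟨b, SimpleGraph.Walk.nil, by simp [List.Chain', List.isChain_nil]⟩
        | (j'+1), hja =>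
          have hj'a : j' ≤ g a := by omega
          obtain ⟨u0, w, h1, h2, h3, _⟩ := extend_walk hab hlt2 (hwalk a j' hj'a)
          exact ⟨u0, w, h1, h2, h3⟩
    have hltvu : ∀ x ∈ l, lt x s(v,u) := by
      intro x hx; rw [Sym2.eq_swap]; exact hlt x hx
    have hnewwalk : ∀ (w0 : V) (j : ℕ), j ≤ stepAux K g u v w0 →
        ∃ (u' : V) (w : H.Walk u' w0),
          w.length = j ∧ List.Chain' lt w.edges ∧ ∀ e' ∈ w.edges, e' ∈ l ++ [s(u,v)] := by
      intro w0 j hj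
      rcases eq_or_ne w0 v with rfl | hwv
      · have hj' : j ≤ max (g w0) (min (g u + 1) K) := by
          simpa [stepAux, Function.update_apply] using hj
        obtain ⟨u', w, h1, h2, h3⟩ := hget u w0 j hadj hlt hj'
        refine ⟨u', w, h1, h2, fun e' he' => ?_⟩
        rcases h3 e' he' with h | h <;> simp [h]
      rcases eq_or_ne w0 u with rfl | hwu
      · have hj' : j ≤ max (g w0) (min (g v + 1) K) := by
          simpa [stepAux, Function.update_apply, hwv] using hj
        obtain ⟨u', w, h1, h2, h3⟩ := hget v w0 j hadj.symm hltvu hj'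
        refine ⟨u', w, h1, h2, fun e' he' => ?_⟩
        rcases h3 e' he' with h | h
        · simp [h]
        · rw [h, Sym2.eq_swap]; simp
      · have hj' : j ≤ g w0 := by
          simpa [stepAux, Function.update_apply, hwv, hwu] using hj
        obtain ⟨u', w, h1, h2, h3⟩ := hwalk w0 j hj'
        exact ⟨u', w, h1, h2, fun e' he' => by simp [h3 e' he']⟩
    refine ⟨?_, ?_, hnewwalk, ?_⟩
    · intro p hp
      rcases Finset.mem_union.mp hp with h | h
      · simp [hfst p h]
      · rcases mem_goodAux h with ⟨rfl, _⟩ | ⟨rfl, _⟩ <;> simp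
    · have hdis : Disjoint GP (goodAux K g u v) := by
        rw [Finset.disjoint_left]
        intro p hpGP hpg
        have h1 : p.1 ∈ l := hfst p hpGP
        rcases mem_goodAux hpg with ⟨rfl, _⟩ | ⟨rfl, _⟩ <;> exact he_not h1
      rw [Finset.card_union_of_disjoint hdis]
      have hsum := stepAux_sum K g huv hgle
      simp only [List.length_append, List.length_singleton]
      omega
    · intro p hp
      rcases Finset.mem_union.mp hp with h | h
      · exact hgood p h
      · rcases mem_goodAux h with ⟨rfl, hK⟩ | ⟨rfl, hK⟩
        · obtain ⟨u0, w, h1, h2, _, h4⟩ :=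
            extend_walk hadj hlt (hwalk u K (le_of_eq hK.symm))
          exact ⟨⟨u0, v, w⟩, rfl, h1, h2, h4⟩
        · obtain ⟨u0, w, h1, h2, _, h4⟩ :=
            extend_walk hadj.symm hltvu (hwalk v K (le_of_eq hK.symm))
          refine ⟨⟨u0, u, w⟩, rfl, h1, h2, ?_⟩
          rw [h4, Sym2.eq_swap]
end MonotoneTrailAux

lemma exists_sorted {V : Type} [Fintype V] (H : SimpleGraph V)
    (lt : Sym2 V → Sym2 V → Prop) (hord : IsEdgeOrder H lt) :
    ∃ l : List (Sym2 V), l.Nodup ∧ (∀ e ∈ l, e ∈ H.edgeSet) ∧ l.Pairwise lt ∧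
      l.length = H.edgeSet.ncard := by
  classical
  have hfin : H.edgeSet.Finite := Set.toFinite _
  set S : Finset (Sym2 V) := hfin.toFinset with hS
  have hmemS : ∀ e, e ∈ S ↔ e ∈ H.edgeSet := fun e => Set.Finite.mem_toFinset hfin
  let α := {e : Sym2 V // e ∈ S}
  let r : α → α → Prop := fun a b => lt a.1 b.1 ∨ a = b
  haveI : DecidableRel r := Classical.decRel r
  have hES : ∀ a : α, a.1 ∈ H.edgeSet := fun a => (hmemS a.1).mp a.2
  haveI : IsTrans α r := by
    constructor
    rintro a b c (hab | rfl) (hbc | rfl)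
    · exact Or.inl (hord.2.1 _ (hES a) _ (hES b) _ (hES c) hab hbc)
    · exact Or.inl hab
    · exact Or.inl hbc
    · exact Or.inr rfl
  haveI : IsAntisymm α r := by
    constructor
    rintro a b (hab | rfl) h2
    · rcases h2 with hba | rfl
      · exact absurd (hord.2.1 _ (hES a) _ (hES b) _ (hES a) hab hba) (hord.1 _ (hES a))
      · rfl
    · rfl
  haveI : IsTotal α r := by
    constructor
    intro a b
    rcases eq_or_ne a b with rfl | hne
    · exact Or.inl (Or.inr rfl)
    · have : a.1 ≠ b.1 := fun h => hne (Subtype.ext h)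
      rcases hord.2.2 _ (hES a) _ (hES b) this with h | h
      · exact Or.inl (Or.inl h)
      · exact Or.inr (Or.inl h)
  set l₀ : List α := Finset.sort Finset.univ r with hl₀
  refine ⟨l₀.map Subtype.val, ?_, ?_, ?_, ?_⟩
  · exact (Finset.sort_nodup _ r).map Subtype.val_injective
  · intro e he
    simp only [List.mem_map] at he
    obtain ⟨a, _, rfl⟩ := he
    exact hES a
  · have h1 : l₀.Pairwise r := Finset.pairwise_sort _ r
    have h2 : (l₀.map Subtype.val).Pairwise
        (fun e e' : Sym2 V => lt e e' ∨ e = e') := by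
      refine List.Pairwise.map _ ?_ h1
      rintro a b (h | rfl)
      · exact Or.inl h
      · exact Or.inr rfl
    have h3 : (l₀.map Subtype.val).Pairwise (fun e e' : Sym2 V => e ≠ e') :=
      (Finset.sort_nodup _ r).map Subtype.val_injective
    refine (h2.and h3).imp ?_
    rintro a b ⟨h | rfl, hne⟩
    · exact h
    · exact absurd rfl hne
  · rw [List.length_map, hl₀, Finset.length_sort, Finset.card_univ, Fintype.card_coe]
    exact (Set.ncard_eq_toFinset_card _ hfin).symm

lemma trailset_finite {V : Type} [Fintype V] (H : SimpleGraph V)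
    (lt : Sym2 V → Sym2 V → Prop) (k : ℕ) :
    {x : (u : V) × (v : V) × H.Walk u v |
        x.2.2.length = k ∧ List.Chain' lt x.2.2.edges}.Finite := by
  classical
  haveI : H.LocallyFinite := fun v => by infer_instance
  haveI : ∀ u v : V, Fintype {p : H.Walk u v // p.length = k} :=
    fun u v => H.fintypeSetWalkLength u v k
  let g0 : (Σ u : V, Σ v : V, {p : H.Walk u v // p.length = k}) →
      ((u : V) × (v : V) × H.Walk u v) := fun x => ⟨x.1, x.2.1, x.2.2.1⟩
  apply Set.Finite.subset (Set.finite_range g0)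
  rintro ⟨u, v, w⟩ ⟨h1, h2⟩
  exact ⟨⟨u, v, w, h1⟩, rfl⟩


/-- **medium monotone counting lemma.** If `|E(H)| ≥ k·n` then `H` contains
at least `k·n/2` distinct monotone `k`-trails. -/
theorem monotone_trail_count {V : Type} [Fintype V]
    (H : SimpleGraph V) (lt : Sym2 V → Sym2 V → Prop) (hord : IsEdgeOrder H lt)
    (k : ℕ) (hk : 0 < k)
    (hE : (k * Fintype.card V : ℝ) ≤ H.edgeSet.ncard) :
    (k * Fintype.card V : ℝ) / 2 ≤
      ({x : (u : V) × (v : V) × H.Walk u v |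
          x.2.2.length = k ∧ List.Chain' lt x.2.2.edges}.ncard : ℝ) := by
  classical
  set T := {x : (u : V) × (v : V) × H.Walk u v |
      x.2.2.length = k ∧ List.Chain' lt x.2.2.edges} with hT
  set n := Fintype.card V with hn
  obtain ⟨l, hnd, hmem, hp, hlen⟩ := exists_sorted H lt hord
  set K := k - 1 with hK
  have hK1 : K + 1 = k := by omega
  obtain ⟨hfst, hcnt, hwalk, hgood⟩ := MonotoneTrailAux.run_inv K H lt l hnd hmem hp
  set GP := (MonotoneTrailAux.run K l).2 with hGP
  have hgle := MonotoneTrailAux.run_le K l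
  have hsum : (∑ w, (MonotoneTrailAux.run K l).1 w) ≤ K * n := by
    calc (∑ w, (MonotoneTrailAux.run K l).1 w) ≤ ∑ _w : V, K :=
          Finset.sum_le_sum (fun w _ => hgle w)
      _ = K * n := by rw [Finset.sum_const, Finset.card_univ, smul_eq_mul, mul_comm]
  have hmain : 2 * l.length ≤ K * n + GP.card :=
    le_trans hcnt (Nat.add_le_add_right hsum _)
  have hTfin : T.Finite := trailset_finite H lt k
  have hncard : T.ncard = hTfin.toFinset.card := Set.ncard_eq_toFinset_card _ hTfin
  have hEnat : k * n ≤ l.length := by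
    rw [hlen]
    exact_mod_cast hE
  by_cases hGPe : GP = ∅
  · -- degenerate case: forces n = 0
    rw [hGPe] at hmain
    simp only [Finset.card_empty, Nat.add_zero] at hmain
    have h1 : K * n = k * n - n := by rw [hK, Nat.sub_one_mul]
    have h2 : n ≤ k * n := Nat.le_mul_of_pos_left n hk
    have hn0 : n = 0 := by
      generalize hA : k * n = A at h1 h2 hEnat
      omega
    rw [hn0]
    simp only [Nat.cast_zero, mul_zero, zero_div]
    exact Nat.cast_nonneg _
  · obtain ⟨p₀, hp₀⟩ := Finset.nonempty_iff_ne_empty.mpr hGPe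
    have h5 : ∀ p ∈ GP, ∃ x : (u : V) × (v : V) × H.Walk u v,
        x ∈ T ∧ x.2.1 = p.2 ∧ x.2.2.edges.getLast? = some p.1 := by
      intro p hp
      obtain ⟨x, hx1, hx2, hx3, hx4⟩ := hgood p hp
      exact ⟨x, ⟨by rw [hx2, hK1], hx3⟩, hx1, hx4⟩
    let F : Sym2 V × V → (u : V) × (v : V) × H.Walk u v :=
      fun p => if h : p ∈ GP then (h5 p h).choose else (h5 p₀ hp₀).choose
    have hF : ∀ p (h : p ∈ GP), F p ∈ T ∧ (F p).2.1 = p.2 ∧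
        (F p).2.2.edges.getLast? = some p.1 := by
      intro p h
      have hFp : F p = (h5 p h).choose := dif_pos h
      rw [hFp]
      exact (h5 p h).choose_spec
    have hcard2 : GP.card ≤ hTfin.toFinset.card := by
      apply Finset.card_le_card_of_injOn F
      · intro p hp
        rw [Finset.mem_coe, Set.Finite.mem_toFinset]
        exact (hF p hp).1
      · intro p hp q hq heq
        have hp' : p ∈ GP := hp
        have hq' : q ∈ GP := hq
        obtain ⟨_, hp2, hp3⟩ := hF p hp'
        obtain ⟨_, hq2, hq3⟩ := hF q hq'
        rw [heq] at hp2 hp3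
        refine Prod.ext ?_ ?_
        · have := hp3.symm.trans hq3
          exact Option.some_injective _ this
        · rw [← hp2, hq2]
    have hc1 : (GP.card : ℝ) ≤ (T.ncard : ℝ) := by
      rw [hncard]
      exact_mod_cast hcard2
    have hc2 : (2 * l.length : ℝ) ≤ (K : ℝ) * n + GP.card := by exact_mod_cast hmain
    have hc3 : (K : ℝ) = (k : ℝ) - 1 := by
      rw [hK]
      push_cast [Nat.cast_sub hk]
      ring
    have hc4 : ((k : ℝ) * n) ≤ (l.length : ℝ) := by
      rw [hlen]
      exact hE
    have hn0 : (0 : ℝ) ≤ (n : ℝ) := Nat.cast_nonneg n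
    have hkn0 : (0 : ℝ) ≤ (k : ℝ) * n := by positivity
    rw [hc3] at hc2
    have hc2' : (2 * (l.length : ℝ)) ≤ (k : ℝ) * n - n + GP.card := by
      have hr : ((k : ℝ) - 1) * n = (k : ℝ) * n - n := by ring
      rw [hr] at hc2
      exact_mod_cast hc2
    linarith
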